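/- In the BCK-algebra B given by Table 2, the BCK-sequences starting from x = 3 and y = 5 satisfy x_k = 1 for all k ≥ 1, y_1 = 2, y_2 = 1, and y_k = 0 for all k ≥ 3; in particular x_4 · y_3 = 1 ≠ 0, so these BCK-sequences cannot be prolonged. -/
import Mathlib


/-- The operation of Table 2 on `B = {0,1,2,3,4,5}`. -/
def tableB : Fin 6 → Fin 6 → Fin 6 :=
  ![![0,0,0,0,0,0],
    ![1,0,0,0,0,0],
    ![2,2,0,0,0,0],
    ![3,2,1,0,1,1],
    ![4,4,4,4,0,0],
    ![5,4,4,4,1,0]]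

/-- The pair of BCK-sequences `(x_k, y_k)` determined by starting elements
`x, y`:  `x_0 = x`, `y_0 = y`, `x_1 = y·(y·x)`, `y_1 = x·(x·y)`, and
`x_k = x_{k-2}·(x_{k-2}·x_{k-1})`, `y_k = y_{k-2}·(y_{k-2}·y_{k-1})` for `k ≥ 2`. -/
def bckPair {X : Type*} (op : X → X → X) (x y : X) : ℕ → X × X
  | 0 => (x, y)
  | 1 => (op y (op y x), op x (op x y))
  | k + 2 =>
      (op (bckPair op x y k).1 (op (bckPair op x y k).1 (bckPair op x y (k + 1)).1),
       op (bckPair op x y k).2 (op (bckPair op x y k).2 (bckPair op x y (k + 1)).2))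

lemma bckPair_stable : ∀ k, (bckPair tableB 3 5 (k + 3)).1 = 1 ∧ (bckPair tableB 3 5 (k + 3)).2 = 0
      ∧ (bckPair tableB 3 5 (k + 4)).1 = 1 ∧ (bckPair tableB 3 5 (k + 4)).2 = 0 := by
  intro k
  induction k with
  | zero => decide
  | succ n ih =>
    obtain ⟨h1, h2, h3, h4⟩ := ih
    refine ⟨h3, h4, ?_, ?_⟩
    · show tableB (bckPair tableB 3 5 (n+3)).1
        (tableB (bckPair tableB 3 5 (n+3)).1 (bckPair tableB 3 5 (n+4)).1) = 1
      rw [h1, h3]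
      decide
    · show tableB (bckPair tableB 3 5 (n+3)).2
        (tableB (bckPair tableB 3 5 (n+3)).2 (bckPair tableB 3 5 (n+4)).2) = 0
      rw [h2, h4]
      decide

lemma bckPair_x1 : ∀ k, 1 ≤ k → (bckPair tableB 3 5 k).1 = 1 := by
  intro k hk
  match k, hk with
  | 1, _ => decide
  | 2, _ => decide
  | (n+3), _ => exact (bckPair_stable n).1

lemma bckPair_y0 : ∀ k, 3 ≤ k → (bckPair tableB 3 5 k).2 = 0 := by
  intro k hk
  match k, hk with
  | (n+3), _ => exact (bckPair_stable n).2.1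

/-- In the BCK-algebra `B` given by Table 2, the BCK-sequences starting from
`x = 3` and `y = 5` satisfy `x_k = 1` for all `k ≥ 1`, `y_1 = 2`, `y_2 = 1`,
and `y_k = 0` for all `k ≥ 3`; in particular `x_4 · y_3 = 1 ≠ 0`, so these
BCK-sequences cannot be prolonged. -/
theorem tableB_sequences_cannot_be_prolonged :
    (∀ k : ℕ, 1 ≤ k → (bckPair tableB 3 5 k).1 = 1) ∧
    (bckPair tableB 3 5 1).2 = 2 ∧
    (bckPair tableB 3 5 2).2 = 1 ∧
    (∀ k : ℕ, 3 ≤ k → (bckPair tableB 3 5 k).2 = 0) ∧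
    tableB (bckPair tableB 3 5 4).1 (bckPair tableB 3 5 3).2 = 1 ∧
    (1 : Fin 6) ≠ 0 ∧
    ¬ (∀ k : ℕ, tableB (bckPair tableB 3 5 (k + 1)).1 (bckPair tableB 3 5 k).2 = 0 ∧
        tableB (bckPair tableB 3 5 (k + 1)).2 (bckPair tableB 3 5 k).1 = 0) := by
  refine ⟨bckPair_x1, by decide, by decide, bckPair_y0, ?_, by decide, ?_⟩
  · rw [(bckPair_stable 1).1, (bckPair_stable 0).2.1]; decide
  · intro h
    have := (h 3).1
    rw [(bckPair_stable 1).1, (bckPair_stable 0).2.1] at this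
    exact absurd this (by decide)
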